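/- Kronecker RIP: if matrices Φ_d, d = 1,...,D, each satisfy the (K,δ_d)-RIP, then the Kronecker product Φ₁ ⊗ Φ₂ ⊗ ... ⊗ Φ_D satisfies the (K,δ)-RIP with δ = ∏_{d=1}^D (1+δ_d) − 1. (It suffices to prove the case D = 2.) -/

import Mathlib

open Matrix Finset Kronecker

/-- A vector is `K`-sparse if it has at most `K` nonzero entries. -/
def KSparse {ι : Type*} [Fintype ι] (K : ℕ) (x : ι → ℝ) : Prop :=
  (Finset.univ.filter fun i => x i ≠ 0).card ≤ K

/-- The `(K, δ)`-restricted isometry property. -/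
def RIP {m n : Type*} [Fintype m] [Fintype n] (Φ : Matrix m n ℝ)
    (K : ℕ) (δ : ℝ) : Prop :=
  ∀ x : n → ℝ, KSparse K x →
    (1 - δ) * ∑ i, x i ^ 2 ≤ ∑ k, Φ.mulVec x k ^ 2 ∧
    ∑ k, Φ.mulVec x k ^ 2 ≤ (1 + δ) * ∑ i, x i ^ 2

lemma rip_delta_nonneg {m n : Type*} [Fintype m] [Fintype n] [DecidableEq n]
    (Φ : Matrix m n ℝ) {K : ℕ} {δ : ℝ} (h : RIP Φ K δ) (hK : 1 ≤ K) (j₀ : n) :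
    0 ≤ δ := by
  have hs : KSparse K (fun j => if j = j₀ then (1:ℝ) else 0) := by
    unfold KSparse
    calc (Finset.univ.filter fun i => (if i = j₀ then (1:ℝ) else 0) ≠ 0).card
        ≤ ({j₀} : Finset n).card := by
          apply Finset.card_le_card
          intro i hi
          simp only [Finset.mem_filter, Finset.mem_univ, true_and] at hi
          simp only [Finset.mem_singleton]
          by_contra hne
          simp [hne] at hi
      _ ≤ K := by simpa using hK
  have := h _ hs
  have hsum : ∑ j, (if j = j₀ then (1:ℝ) else 0) ^ 2 = 1 := by
    simp [ite_pow]
  rw [hsum] at this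
  linarith [this.1, this.2]

/-- Kronecker RIP: if `A` has the `(K,δ₁)`-RIP and `B` has the `(K,δ₂)`-RIP,
then `A ⊗ B` has the `(K, (1+δ₁)(1+δ₂) − 1)`-RIP. -/
theorem kronecker_rip {M₁ N₁ M₂ N₂ K : ℕ} {δ₁ δ₂ : ℝ}
    (A : Matrix (Fin M₁) (Fin N₁) ℝ) (B : Matrix (Fin M₂) (Fin N₂) ℝ)
    (hA : RIP A K δ₁) (hB : RIP B K δ₂) :
    RIP (A ⊗ₖ B) K ((1 + δ₁) * (1 + δ₂) - 1) := by
  intro x hx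
  by_cases hx0 : ∀ p, x p = 0
  · have h1 : ∑ p, x p ^ 2 = 0 := by simp [hx0]
    have h2 : ∑ k, (A ⊗ₖ B).mulVec x k ^ 2 = 0 := by
      have : (A ⊗ₖ B).mulVec x = 0 := by
        funext k
        simp [Matrix.mulVec, dotProduct, hx0]
      simp [this]
    rw [h1, h2]
    norm_num
  · push_neg at hx0
    obtain ⟨p₀, hp₀⟩ := hx0
    -- nondegeneracy
    have hK1 : 1 ≤ K := by
      refine le_trans ?_ hx
      have : p₀ ∈ Finset.univ.filter fun p => x p ≠ 0 := by simp [hp₀]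
      exact Finset.card_pos.mpr ⟨p₀, this⟩
    have hδ₁ : 0 ≤ δ₁ := rip_delta_nonneg A hA hK1 p₀.1
    have hδ₂ : 0 ≤ δ₂ := rip_delta_nonneg B hB hK1 p₀.2
    -- intermediate vector y
    set y : Fin N₁ → Fin M₂ → ℝ := fun j k => B.mulVec (fun l => x (j, l)) k with hy
    -- sparsity of rows of x
    have hrow : ∀ j : Fin N₁, KSparse K (fun l => x (j, l)) := by
      intro j
      unfold KSparse
      refine le_trans ?_ hx
      apply Finset.card_le_card_of_injOn (fun l => (j, l))
      · intro l hl
        simp only [Finset.mem_filter, Finset.mem_univ, true_and] at hl ⊢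
        simpa using hl
      · intro a _ b _ hab
        exact (Prod.mk.injEq _ _ _ _).mp hab |>.2
    -- sparsity of columns of y
    have hcol : ∀ k : Fin M₂, KSparse K (fun j => y j k) := by
      intro k
      unfold KSparse
      refine le_trans ?_ hx
      calc (Finset.univ.filter fun j => y j k ≠ 0).card
          ≤ ((Finset.univ.filter fun p => x p ≠ 0).image Prod.fst).card := by
            apply Finset.card_le_card
            intro j hj
            simp only [Finset.mem_filter, Finset.mem_univ, true_and] at hj
            by_contra hmem
            have hall : ∀ l, x (j, l) = 0 := by
              intro l
              by_contra hne
              exact hmem (Finset.mem_image.mpr ⟨(j, l), by simp [hne], rfl⟩)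
            apply hj
            simp [hy, Matrix.mulVec, dotProduct, hall]
        _ ≤ (Finset.univ.filter fun p => x p ≠ 0).card := Finset.card_image_le
    -- pointwise identity
    have hpoint : ∀ (i : Fin M₁) (k : Fin M₂),
        (A ⊗ₖ B).mulVec x (i, k) = A.mulVec (fun j => y j k) i := by
      intro i k
      simp only [Matrix.mulVec, dotProduct, kroneckerMap_apply, Fintype.sum_prod_type, hy,
        Finset.mul_sum]
      apply Finset.sum_congr rfl
      intro j _
      apply Finset.sum_congr rfl
      intro l _
      ring
    set X : ℝ := ∑ p, x p ^ 2 with hX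
    set T : ℝ := ∑ j, ∑ k, y j k ^ 2 with hT
    set S : ℝ := ∑ q, (A ⊗ₖ B).mulVec x q ^ 2 with hS
    have hXnn : 0 ≤ X := Finset.sum_nonneg fun _ _ => sq_nonneg _
    have hXeq : X = ∑ j, ∑ l, x (j, l) ^ 2 := by
      rw [hX, Fintype.sum_prod_type]
    have hSeq : S = ∑ k, ∑ i, A.mulVec (fun j => y j k) i ^ 2 := by
      rw [hS, Fintype.sum_prod_type, Finset.sum_comm]
      apply Finset.sum_congr rfl
      intro k _
      apply Finset.sum_congr rfl
      intro i _
      rw [hpoint]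
    -- bounds on T
    have hTlb : (1 - δ₂) * X ≤ T := by
      rw [hXeq, hT, Finset.mul_sum]
      exact Finset.sum_le_sum fun j _ => (hB _ (hrow j)).1
    have hTub : T ≤ (1 + δ₂) * X := by
      rw [hXeq, hT, Finset.mul_sum]
      exact Finset.sum_le_sum fun j _ => (hB _ (hrow j)).2
    -- bounds on S
    have hTswap : T = ∑ k, ∑ j, y j k ^ 2 := by rw [hT, Finset.sum_comm]
    have hSlb : (1 - δ₁) * T ≤ S := by
      rw [hSeq, hTswap, Finset.mul_sum]
      exact Finset.sum_le_sum fun k _ => (hA _ (hcol k)).1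
    have hSub : S ≤ (1 + δ₁) * T := by
      rw [hSeq, hTswap, Finset.mul_sum]
      exact Finset.sum_le_sum fun k _ => (hA _ (hcol k)).2
    constructor
    · -- lower bound
      rcases le_or_gt δ₁ 1 with h1 | h1
      · nlinarith [mul_le_mul_of_nonneg_left hTlb (by linarith : (0:ℝ) ≤ 1 - δ₁),
          mul_nonneg hδ₁ hδ₂, mul_nonneg (mul_nonneg hδ₁ hδ₂) hXnn]
      · nlinarith [mul_le_mul_of_nonneg_left hTub (by linarith : (0:ℝ) ≤ δ₁ - 1),
          mul_nonneg hδ₂ hXnn]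
    · nlinarith [mul_le_mul_of_nonneg_left hTub (by linarith : (0:ℝ) ≤ 1 + δ₁)]
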